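/- Let (Ω,T) be a subshift over a finite alphabet A with associated set of words W. If (Ω,T) is linearly repetitive, i.e. there exists D > 0 such that every nonempty v ∈ W is a factor of every w ∈ W with |w| ≥ D|v|, then (Ω,T) satisfies (SET): for every subadditive function F: W → ℝ the limit lim_{|w|→∞} F(w)/|w| exists and equals inf_{n≥1} F^{(n)}. -/

import Mathlib

open Filter Topology

namespace SubshiftErgodic

variable {A : Type*}

/-- The shift map `T` on two-sided sequences over `A`: `(T ω) n = ω (n+1)`. -/
def shift (ω : ℤ → A) : ℤ → A := fun n => ω (n + 1)

/-- The `n`-th power of the shift: `(shiftZ n ω) k = ω (k + n)`. -/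
def shiftZ (n : ℤ) (ω : ℤ → A) : ℤ → A := fun k => ω (k + n)

/-- `Ω` is a subshift: a closed, shift-invariant subset of `A^ℤ`. -/
def IsSubshift [TopologicalSpace A] (Ω : Set (ℤ → A)) : Prop :=
  IsClosed Ω ∧ shift '' Ω = Ω

/-- Minimality: every orbit `{T^n ω : n ∈ ℤ}` is dense in `Ω`. -/
def IsMinimal [TopologicalSpace A] (Ω : Set (ℤ → A)) : Prop :=
  ∀ ω ∈ Ω, Ω ⊆ closure {ρ | ∃ n : ℤ, ρ = shiftZ n ω}

/-- The finite word `w` occurs in the sequence `ω` at position `k`. -/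
def OccursAt (w : List A) (ω : ℤ → A) (k : ℤ) : Prop :=
  ∀ i : Fin w.length, ω (k + (i : ℕ)) = w.get i

/-- The set `W = W(Ω)` of finite words occurring as factors of elements of `Ω`. -/
def words (Ω : Set (ℤ → A)) : Set (List A) :=
  {w | ∃ ω ∈ Ω, ∃ k : ℤ, OccursAt w ω k}

/-- `v` occurs as a factor of the finite word `w` at position `i`. -/
def OccursIn (v w : List A) (i : ℕ) : Prop :=
  i + v.length ≤ w.length ∧ v <+: w.drop i

/-- `♯_v(w)`: the number of occurrences of `v` as a factor of `w`. -/
noncomputable def occ (v w : List A) : ℕ :=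
  {i : ℕ | OccursIn v w i}.ncard

/-- `z` is a return word of `u` (relative to the set of words `W`). -/
def IsReturnWord (W : Set (List A)) (z u : List A) : Prop :=
  z ∈ W ∧ z ++ u ∈ W ∧ occ u (z ++ u) = 2 ∧ u <+: z ++ u

/-- The maximal number of pairwise disjoint occurrences of `v` as a factor of `w`. -/
noncomputable def maxDisjoint (v w : List A) : ℕ :=
  sSup {m : ℕ | ∃ s : Fin m → ℕ, (∀ i, OccursIn v w (s i)) ∧
    ∀ i j : Fin m, i < j → s i + v.length ≤ s j}

/-- The filter expressing `|w| → ∞` along words `w ∈ W`. -/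
def wordsFilter (W : Set (List A)) : Filter (List A) :=
  ⨅ L : ℕ, Filter.principal {w | w ∈ W ∧ L ≤ w.length}

/-- `lim_{|w| → ∞} g w = x` over `w ∈ W`: for every `ε > 0` there is `L` with
`‖g w - x‖ ≤ ε` for all `w ∈ W` with `|w| ≥ L`. -/
def TendstoWords {B : Type*} [SeminormedAddCommGroup B] (W : Set (List A))
    (g : List A → B) (x : B) : Prop :=
  ∀ ε : ℝ, 0 < ε → ∃ L : ℕ, ∀ w ∈ W, L ≤ w.length → ‖g w - x‖ ≤ ε

/-- `liminf_{|w| → ∞} g w` over `w ∈ W`, valued in the extended reals. -/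
noncomputable def liminfWords (W : Set (List A)) (g : List A → ℝ) : EReal :=
  Filter.liminf (fun w => (g w : EReal)) (wordsFilter W)

/-- `limsup_{|w| → ∞} g w` over `w ∈ W`, valued in the extended reals. -/
noncomputable def limsupWords (W : Set (List A)) (g : List A → ℝ) : EReal :=
  Filter.limsup (fun w => (g w : EReal)) (wordsFilter W)

/-- `ν(v) = liminf_{|w| → ∞} l_v(w)/|w|`, where
`l_v(w) = (max number of pairwise disjoint copies of v in w) ⬝ |v|`. -/
noncomputable def nu (W : Set (List A)) (v : List A) : EReal :=
  liminfWords W (fun w => ((maxDisjoint v w * v.length : ℕ) : ℝ) / (w.length : ℝ))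

/-- Condition (PQ): uniform positivity of quasiweights. -/
def PQ (W : Set (List A)) : Prop :=
  ∃ C : ℝ, 0 < C ∧ ∀ v ∈ W, v ≠ [] → (C : EReal) ≤ nu W v

/-- Unique ergodicity: all word frequencies `♯_v(w)/|w|` converge as `|w| → ∞`. -/
def UniquelyErgodic (Ω : Set (ℤ → A)) : Prop :=
  ∀ v ∈ words Ω, ∃ x : ℝ,
    TendstoWords (words Ω) (fun w => (occ v w : ℝ) / (w.length : ℝ)) x

/-- `F : W → ℝ` is subadditive. -/
def IsSubadditive (W : Set (List A)) (F : List A → ℝ) : Prop :=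
  ∀ a b : List A, a ∈ W → b ∈ W → a ++ b ∈ W → F (a ++ b) ≤ F a + F b

/-- `F^(n) = max { F v / |v| : v ∈ W, |v| = n }`. -/
noncomputable def wordSup (W : Set (List A)) (F : List A → ℝ) (n : ℕ) : ℝ :=
  sSup ((fun v => F v / (v.length : ℝ)) '' {v | v ∈ W ∧ v.length = n})

/-- Condition (SET): the uniform subadditive ergodic theorem holds, i.e. for every
subadditive `F` the limit `lim_{|w|→∞} F(w)/|w|` exists and equals `inf_{n ≥ 1} F^(n)`
(in the extended reals). -/
def SET (W : Set (List A)) : Prop :=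
  ∀ F : List A → ℝ, IsSubadditive W F →
    Filter.Tendsto (fun w => ((F w / (w.length : ℝ) : ℝ) : EReal)) (wordsFilter W)
      (nhds (⨅ n : {n : ℕ // 1 ≤ n}, ((wordSup W F n.1 : ℝ) : EReal)))

/-- A Banach-space-valued function `F : W → B` is additive. -/
def IsAdditive {B : Type*} [SeminormedAddCommGroup B] (W : Set (List A))
    (F : List A → B) : Prop :=
  ∃ D : ℝ, 0 < D ∧ ∃ c : ℕ → ℝ, Antitone c ∧ (∀ n, 0 ≤ c n) ∧
    Filter.Tendsto c Filter.atTop (nhds 0) ∧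
    (∀ vs : List (List A), (∀ v ∈ vs, v ∈ W) → vs.flatten ∈ W →
      ‖F vs.flatten - (vs.map F).sum‖ ≤ (vs.map fun v => c v.length * (v.length : ℝ)).sum) ∧
    ∀ v ∈ W, ‖F v‖ ≤ D * (v.length : ℝ)

/-- Condition (HP): powers in `W` have uniformly bounded exponent. -/
def HP (W : Set (List A)) : Prop :=
  ∃ N : ℕ, 0 < N ∧ ∀ v : List A, v ≠ [] → ∀ k : ℕ,
    (List.replicate k v).flatten ∈ W → k ≤ N

/-- Condition (PW): uniform positivity of weights. -/
def PW (W : Set (List A)) : Prop :=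
  ∃ E : ℝ, 0 < E ∧ ∀ v ∈ W, v ≠ [] →
    (E : EReal) ≤ liminfWords W (fun w => ((occ v w * v.length : ℕ) : ℝ) / (w.length : ℝ))

/-- Linear repetitivity. -/
def LinearlyRepetitive (W : Set (List A)) : Prop :=
  ∃ D : ℝ, 0 < D ∧ ∀ v ∈ W, v ≠ [] → ∀ w ∈ W, D * (v.length : ℝ) ≤ (w.length : ℝ) →
    v <:+: w

/-- Aperiodicity: no element of `Ω` is periodic. -/
def Aperiodic (Ω : Set (ℤ → A)) : Prop :=
  ∀ ω ∈ Ω, ∀ p : ℕ, 1 ≤ p → shiftZ (p : ℤ) ω ≠ ω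

/-- `m(n)`: the minimal length of a return word of a word of length `n` in `W`. -/
noncomputable def mRet (W : Set (List A)) (n : ℕ) : ℕ :=
  sInf {k : ℕ | ∃ v z : List A, v ∈ W ∧ v.length = n ∧ IsReturnWord W z v ∧ z.length = k}

/-- `k_ω^w`: the minimal nonnegative position at which `w` occurs in `ω`. -/
noncomputable def firstOcc (ω : ℤ → A) (w : List A) : ℕ :=
  sInf {k : ℕ | OccursAt w ω (k : ℤ)}

/-- `F_ω(w) = ∑_{j=0}^{|w|-1} f(T^{k_ω^w + j} ω)`. -/
noncomputable def birkhoffF {B : Type*} [AddCommMonoid B] (f : (ℤ → A) → B)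
    (ω : ℤ → A) (w : List A) : B :=
  ∑ j ∈ Finset.range w.length, f (shiftZ ((firstOcc ω w : ℤ) + (j : ℤ)) ω)



section AuxLemmas

variable {W : Set (List A)} {F : List A → ℝ}

lemma infix_mem_words {Ω : Set (ℤ → A)} {v w : List A}
    (hvw : v <:+: w) (hw : w ∈ words Ω) : v ∈ words Ω := by
  obtain ⟨s, t, rfl⟩ := hvw
  obtain ⟨ω, hω, k, hk⟩ := hw
  refine ⟨ω, hω, k + s.length, fun i => ?_⟩
  have hi : s.length + (i : ℕ) < (s ++ v ++ t).length := by
    simp only [List.length_append]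
    have := i.isLt
    omega
  have h := hk ⟨s.length + i, hi⟩
  simp only [List.get_eq_getElem] at h ⊢
  have hgetl : (s ++ v ++ t)[s.length + (i:ℕ)]'hi = (s ++ v)[s.length + (i:ℕ)]'(by
      simp only [List.length_append]; exact Nat.add_lt_add_left i.isLt _) := by
    rw [List.getElem_append_left]
  have hgetr : (s ++ v)[s.length + (i:ℕ)]'(by
      simp only [List.length_append]; exact Nat.add_lt_add_left i.isLt _) = v[(i:ℕ)] := by
    rw [List.getElem_append_right (Nat.le_add_right _ _)]
    congr 1
    omega
  rw [hgetl, hgetr] at h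
  rw [← h]
  congr 1
  push_cast
  ring

lemma exists_word_len {Ω : Set (ℤ → A)} (hΩ : Ω.Nonempty) (n : ℕ) :
    ∃ v ∈ words Ω, v.length = n := by
  obtain ⟨ω, hω⟩ := hΩ
  refine ⟨(List.range n).map (fun i => ω (i : ℕ)), ⟨ω, hω, 0, fun i => ?_⟩, by simp⟩
  have hi : (i : ℕ) < n := by simpa using i.isLt
  simp [List.get_eq_getElem, List.getElem_map, List.getElem_range, hi]

lemma chop (hcl : ∀ v w : List A, v <:+: w → w ∈ W → v ∈ W) (hF : IsSubadditive W F)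
    (n : ℕ) (hn : 1 ≤ n) (S C : ℝ) (hC : 0 ≤ C)
    (hS : ∀ u ∈ W, u.length = n → F u ≤ n * S)
    (hsmall : ∀ u ∈ W, u ≠ [] → u.length < n → F u ≤ C) :
    ∀ v ∈ W, v ≠ [] → F v ≤ v.length * S + (n * |S| + C) := by
  have key : ∀ m : ℕ, ∀ v, v ∈ W → v ≠ [] → v.length = m →
      F v ≤ v.length * S + (n * |S| + C) := by
    intro m
    induction m using Nat.strong_induction_on with
    | _ m ih =>
      intro v hv hne hlen
      by_cases hlt : v.length < n
      · have h1 := hsmall v hv hne hlt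
        have hvn : (v.length : ℝ) ≤ n := by exact_mod_cast hlt.le
        have hv1 : (0:ℝ) ≤ (v.length : ℝ) := by positivity
        nlinarith [abs_nonneg S, neg_abs_le S]
      · push_neg at hlt
        have hul : (v.take n).length = n := by
          simp [List.length_take]; omega
        have huW : v.take n ∈ W := hcl _ _ ((List.take_prefix n v).isInfix) hv
        have hrW : v.drop n ∈ W := hcl _ _ ((List.drop_suffix n v).isInfix) hv
        have hFu : F (v.take n) ≤ n * S := hS _ huW hul
        by_cases hre : v.drop n = []
        · have hvu : v = v.take n := by
            conv_lhs => rw [← List.take_append_drop n v]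
            rw [hre, List.append_nil]
          have hvlen : v.length = n := by rw [hvu, hul]
          have h0 : (0:ℝ) ≤ n * |S| + C := by positivity
          rw [← hvu] at hFu
          rw [hvlen]
          linarith
        · have hrl : (v.drop n).length = v.length - n := by simp
          have hrlt : (v.drop n).length < m := by omega
          have hFr := ih _ hrlt _ hrW hre rfl
          have hFv : F v ≤ F (v.take n) + F (v.drop n) := by
            have h := hF _ _ huW hrW (by rw [List.take_append_drop]; exact hv)
            rwa [List.take_append_drop] at h
          have hc : ((v.drop n).length : ℝ) = (v.length : ℝ) - n := by
            rw [hrl]; push_cast [Nat.cast_sub hlt]; ring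
          have : (n:ℝ) * S + (((v.length:ℝ) - n) * S) = v.length * S := by ring
          rw [hc] at hFr
          linarith
  intro v hv hne
  exact key v.length v hv hne rfl

lemma blocks (hcl : ∀ v w : List A, v <:+: w → w ∈ W → v ∈ W) (hF : IsSubadditive W F)
    (q : ℕ) (hq : 1 ≤ q) (Pb C : ℝ) (hC : 0 ≤ C)
    (hPb : ∀ b ∈ W, b.length = q → F b ≤ Pb)
    (hsmall : ∀ u ∈ W, u ≠ [] → u.length < q → F u ≤ C) :
    ∀ v ∈ W, q ≤ v.length → F v ≤ ((v.length / q : ℕ) : ℝ) * Pb + C := by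
  have key : ∀ m : ℕ, ∀ v, v ∈ W → q ≤ v.length → v.length = m →
      F v ≤ ((v.length / q : ℕ) : ℝ) * Pb + C := by
    intro m
    induction m using Nat.strong_induction_on with
    | _ m ih =>
      intro v hv hqv hlen
      have hbl : (v.take q).length = q := by simp [List.length_take]; omega
      have hbW : v.take q ∈ W := hcl _ _ ((List.take_prefix q v).isInfix) hv
      have hrW : v.drop q ∈ W := hcl _ _ ((List.drop_suffix q v).isInfix) hv
      have hFb : F (v.take q) ≤ Pb := hPb _ hbW hbl
      have hrl : (v.drop q).length = v.length - q := by simp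
      by_cases hre : v.drop q = []
      · have hvq : v.length = q := by
          have := List.length_eq_zero_iff.mpr hre
          omega
        have hdiv : v.length / q = 1 := by rw [hvq, Nat.div_self hq]
        have hvb : v = v.take q := by
          conv_lhs => rw [← List.take_append_drop q v]
          rw [hre, List.append_nil]
        rw [← hvb] at hFb
        rw [hvq, Nat.div_self hq]
        push_cast
        linarith
      · have hFv : F v ≤ F (v.take q) + F (v.drop q) := by
          have h := hF _ _ hbW hrW (by rw [List.take_append_drop]; exact hv)
          rwa [List.take_append_drop] at h
        have hrne : 1 ≤ (v.drop q).length := List.length_pos_iff.mpr hre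
        by_cases hq2 : q ≤ (v.drop q).length
        · have hrlt : (v.drop q).length < m := by omega
          have hFr := ih _ hrlt _ hrW hq2 rfl
          have hdiv : v.length / q = (v.drop q).length / q + 1 := by
            rw [hrl]
            conv_lhs => rw [show v.length = (v.length - q) + q from by omega]
            rw [Nat.add_div_right _ hq]
          rw [hdiv]
          push_cast
          linarith
        · push_neg at hq2
          have hFr := hsmall _ hrW hre hq2
          have hdiv : v.length / q = 1 := by
            have h2 : v.length < 2 * q := by omega
            have := Nat.div_eq_of_lt_le (by omega : 1 * q ≤ v.length)
              (by omega : v.length < (1+1) * q)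
            simpa using this
          rw [hdiv]
          push_cast
          linarith
  intro v hv hqv
  exact key v.length v hv hqv rfl

lemma perblock (hcl : ∀ v w : List A, v <:+: w → w ∈ W → v ∈ W) (hF : IsSubadditive W F)
    {w : List A} (hw : w ∈ W) {q : ℕ} (hwq : w.length < q)
    (hocc : ∀ b ∈ W, b.length = q → w <:+: b)
    (S0 K : ℝ) (hK : 0 ≤ K)
    (hfill : ∀ u ∈ W, u ≠ [] → F u ≤ u.length * S0 + K) :
    ∀ b ∈ W, b.length = q → F b ≤ ((q:ℝ) - w.length) * S0 + 2*K + F w := by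
  intro b hb hbl
  obtain ⟨s, t, hst⟩ := hocc b hb hbl
  have hlen : s.length + w.length + t.length = q := by
    rw [← hbl, ← hst]; simp [List.length_append]; ring
  have hsW : s ∈ W := hcl _ _ ⟨[], w ++ t, by simp [← List.append_assoc, hst]⟩ hb
  have htW : t ∈ W := hcl _ _ ⟨s ++ w, [], by simp [hst]⟩ hb
  have hwtW : w ++ t ∈ W := hcl _ _ ⟨s, [], by simp [← List.append_assoc, hst]⟩ hb
  have hswW : s ++ w ∈ W := hcl _ _ ⟨[], t, by simp [hst]⟩ hb
  rcases eq_or_ne s [] with rfl | hs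
  · rcases eq_or_ne t [] with rfl | ht
    · exfalso
      simp at hst
      rw [← hst] at hbl
      omega
    · simp only [List.nil_append] at hst
      have h1 : F b ≤ F w + F t := by
        rw [← hst]
        exact hF w t hw htW (hst ▸ hb)
      have h2 := hfill t htW ht
      have hlt : (t.length : ℝ) = (q:ℝ) - w.length := by
        simp at hlen
        have : t.length = q - w.length := by omega
        rw [this]; push_cast [Nat.cast_sub hwq.le]; ring
      rw [hlt] at h2
      linarith
  · rcases eq_or_ne t [] with rfl | ht
    · simp only [List.append_nil] at hst
      have h1 : F b ≤ F s + F w := by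
        rw [← hst]
        exact hF s w hsW hw (hst ▸ hb)
      have h2 := hfill s hsW hs
      have hls : (s.length : ℝ) = (q:ℝ) - w.length := by
        simp at hlen
        have : s.length = q - w.length := by omega
        rw [this]; push_cast [Nat.cast_sub hwq.le]; ring
      rw [hls] at h2
      linarith
    · have h1 : F b ≤ F (s ++ w) + F t := by
        rw [← hst]
        exact hF (s ++ w) t hswW htW (hst ▸ hb)
      have h2 : F (s ++ w) ≤ F s + F w := hF s w hsW hw hswW
      have h3 := hfill s hsW hs
      have h4 := hfill t htW ht
      have hls : (s.length : ℝ) + t.length = (q:ℝ) - w.length := by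
        have : s.length + t.length = q - w.length := by omega
        have h := congrArg (fun x : ℕ => (x:ℝ)) this
        push_cast [Nat.cast_sub hwq.le] at h
        linarith
      have h5 : ((s.length:ℝ) + t.length) * S0 = ((q:ℝ) - w.length) * S0 := by rw [hls]
      have h6 : ((s.length:ℝ) + (t.length:ℝ)) * S0
          = (s.length:ℝ)*S0 + (t.length:ℝ)*S0 := by ring
      linarith

lemma existsC [Finite A] (F : List A → ℝ) (n : ℕ) :
    ∃ C : ℝ, 0 ≤ C ∧ ∀ u ∈ W, u ≠ [] → u.length < n → F u ≤ C := by
  have hfin : (F '' {l : List A | l.length < n}).Finite :=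
    (List.finite_length_lt A n).image F
  obtain ⟨C, hC⟩ := hfin.bddAbove
  refine ⟨max C 0, le_max_right _ _, fun u _ _ hu => ?_⟩
  exact le_trans (hC ⟨u, hu, rfl⟩) (le_max_left _ _)

lemma wordSup_bddAbove [Finite A] (n : ℕ) :
    BddAbove ((fun v => F v / (v.length : ℝ)) '' {v | v ∈ W ∧ v.length = n}) := by
  apply Set.Finite.bddAbove
  apply Set.Finite.image
  exact (List.finite_length_lt A (n+1)).subset (fun v hv => by
    simp only [Set.mem_setOf_eq] at hv ⊢; omega)

lemma le_wordSup [Finite A] {v : List A} {n : ℕ} (hv : v ∈ W) (hl : v.length = n) :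
    F v / (v.length : ℝ) ≤ wordSup W F n :=
  le_csSup (wordSup_bddAbove n) ⟨v, ⟨hv, hl⟩, rfl⟩

lemma wordSup_le {n : ℕ} {B : ℝ} (hne : ∃ v ∈ W, v.length = n)
    (hB : ∀ v ∈ W, v.length = n → F v / (v.length : ℝ) ≤ B) : wordSup W F n ≤ B := by
  apply csSup_le
  · obtain ⟨v, hv, hl⟩ := hne
    exact ⟨_, ⟨v, ⟨hv, hl⟩, rfl⟩⟩
  · rintro x ⟨v, ⟨hv, hl⟩, rfl⟩
    exact hB v hv hl

lemma eventually_wordsFilter {p : List A → Prop}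
    (h : ∃ L : ℕ, ∀ w ∈ W, L ≤ w.length → p w) :
    ∀ᶠ w in wordsFilter W, p w := by
  obtain ⟨L, hL⟩ := h
  have hle : wordsFilter W ≤ Filter.principal {w | w ∈ W ∧ L ≤ w.length} := iInf_le _ L
  apply hle
  rw [Filter.mem_principal]
  intro w hw
  exact hL w hw.1 hw.2

set_option maxHeartbeats 2000000 in
lemma lower_contradiction [Finite A]
    (hcl : ∀ v w : List A, v <:+: w → w ∈ W → v ∈ W) (hF : IsSubadditive W F)
    (hlen : ∀ n : ℕ, ∃ v ∈ W, v.length = n)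
    (D : ℝ) (hD : 0 < D)
    (hLR : ∀ v ∈ W, v ≠ [] → ∀ w ∈ W, D * v.length ≤ w.length → v <:+: w)
    (ΛR : ℝ)
    (hΛle : ∀ n : ℕ, 1 ≤ n → ΛR ≤ wordSup W F n)
    (hex : ∀ δ : ℝ, 0 < δ → ∃ n, 1 ≤ n ∧ wordSup W F n ≤ ΛR + δ)
    (ε : ℝ) (hε : 0 < ε)
    (hbad : ∀ L : ℕ, ∃ w ∈ W, L ≤ w.length ∧ F w / (w.length:ℝ) < ΛR - ε) : False := by
  have hD3 : (0:ℝ) < D + 3 := by linarith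
  obtain ⟨δ, hδ, hδε⟩ : ∃ δ : ℝ, 0 < δ ∧ δ * (8*(D+3)) = ε :=
    ⟨ε / (8*(D+3)), by positivity,
      div_mul_cancel₀ ε (by positivity : (0:ℝ) < 8*(D+3)).ne'⟩
  obtain ⟨n0, hn0, hWS0⟩ := hex δ hδ
  obtain ⟨C0, hC0, hC0b⟩ := existsC (W := W) F n0
  have hSn0 : ∀ u ∈ W, u.length = n0 → F u ≤ (n0:ℝ) * (ΛR + δ) := by
    intro u hu hul
    have h1 := le_wordSup (F := F) hu hul
    have h2 : (0:ℝ) < (n0:ℝ) := by exact_mod_cast hn0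
    rw [hul, div_le_iff₀ h2] at h1
    nlinarith
  obtain ⟨K, hK, hfill⟩ :
      ∃ K : ℝ, 0 ≤ K ∧ ∀ u ∈ W, u ≠ [] → F u ≤ (u.length:ℝ) * (ΛR + δ) + K :=
    ⟨(n0:ℝ) * |ΛR + δ| + C0, by positivity,
      chop hcl hF n0 hn0 (ΛR + δ) C0 hC0 hSn0 hC0b⟩
  obtain ⟨L0, hL0⟩ := exists_nat_gt (16 * K * (D + 3) / ε)
  obtain ⟨w, hwW, hwL, hwbad⟩ := hbad (max 1 L0)
  have hw1 : 1 ≤ w.length := le_trans (le_max_left _ _) hwL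
  have hwne : w ≠ [] := by
    intro h; rw [h] at hw1; simp at hw1
  have hw0R : (0:ℝ) < (w.length:ℝ) := by exact_mod_cast hw1
  have hFw : F w < (w.length:ℝ) * (ΛR - ε) := by
    rw [div_lt_iff₀ hw0R] at hwbad; linarith
  have hKw : 16 * K * (D + 3) < ε * w.length := by
    have h3 : (L0:ℝ) ≤ (w.length:ℝ) := by
      exact_mod_cast le_trans (le_max_right 1 L0) hwL
    rw [div_lt_iff₀ hε] at hL0
    nlinarith
  obtain ⟨q, hq1, hqD, hqub⟩ : ∃ q : ℕ, w.length < q ∧ D * (w.length:ℝ) ≤ (q:ℝ) ∧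
      (q:ℝ) ≤ (D + 3) * w.length := by
    refine ⟨⌈D * (w.length:ℝ)⌉₊ + w.length, ?_, ?_, ?_⟩
    · have h : 0 < ⌈D * (w.length:ℝ)⌉₊ := Nat.ceil_pos.mpr (by positivity)
      omega
    · have h := Nat.le_ceil (D * (w.length:ℝ))
      push_cast
      linarith
    · have h1 : (⌈D * (w.length:ℝ)⌉₊ : ℝ) < D * w.length + 1 :=
        Nat.ceil_lt_add_one (by positivity)
      have hw1R : (1:ℝ) ≤ (w.length:ℝ) := by exact_mod_cast hw1
      push_cast
      nlinarith
  have hocc : ∀ b ∈ W, b.length = q → w <:+: b := by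
    intro b hb hbq
    exact hLR w hwW hwne b hb (by rw [hbq]; exact hqD)
  have hperblock : ∀ b ∈ W, b.length = q →
      F b ≤ ((q:ℝ) - w.length) * (ΛR + δ) + 2*K + F w :=
    perblock hcl hF hwW hq1 hocc (ΛR + δ) K hK hfill
  obtain ⟨Cq, hCq, hCqb⟩ := existsC (W := W) F q
  have hq0 : 1 ≤ q := by omega
  have hq0R : (0:ℝ) < (q:ℝ) := by exact_mod_cast hq0
  have hblocks := blocks hcl hF q hq0 _ Cq hCq hperblock hCqb
  obtain ⟨N, hN1, hNge⟩ : ∃ N : ℕ, 1 ≤ N ∧ 4 * Cq * (D+3) ≤ (N:ℝ) * (ε * q) := by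
    obtain ⟨N0, hN0⟩ := exists_nat_gt (4 * Cq * (D+3) / (ε * q))
    refine ⟨max 1 N0, le_max_left _ _, ?_⟩
    have hεq : (0:ℝ) < ε * q := by positivity
    rw [div_lt_iff₀ hεq] at hN0
    have : (N0:ℝ) ≤ (max 1 N0 : ℕ) := by exact_mod_cast le_max_right 1 N0
    nlinarith
  have hNR : (0:ℝ) < (N:ℝ) := by exact_mod_cast hN1
  have hnq : q ≤ N * q := Nat.le_mul_of_pos_left q (by omega)
  have hn1 : 1 ≤ N * q := le_trans hq0 hnq
  have hn0R : (0:ℝ) < ((N*q : ℕ):ℝ) := by exact_mod_cast hn1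
  have hdivq : N * q / q = N := Nat.mul_div_cancel _ (by omega)
  have hub : ∀ v ∈ W, v.length = N * q →
      F v / (v.length:ℝ) ≤ ((N:ℝ) * (((q:ℝ) - w.length) * (ΛR + δ) + 2*K + F w) + Cq)
        / ((N*q : ℕ):ℝ) := by
    intro v hv hvl
    have hb := hblocks v hv (by rw [hvl]; exact hnq)
    rw [hvl, hdivq] at hb
    rw [hvl]
    exact (div_le_div_iff_of_pos_right hn0R).mpr hb
  have hsup := wordSup_le (hlen (N*q)) hub
  have hΛn := le_trans (hΛle (N*q) hn1) hsup
  rw [le_div_iff₀ hn0R] at hΛn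
  have hnR : ((N*q : ℕ):ℝ) = (N:ℝ) * q := by push_cast; ring
  rw [hnR] at hΛn
  have hqw : (w.length:ℝ) ≤ (q:ℝ) := by exact_mod_cast hq1.le
  have hδq : (q:ℝ) * δ ≤ ε * w.length / 8 := by
    have h8 : (q:ℝ) * δ ≤ ((D+3) * w.length) * δ := mul_le_mul_of_nonneg_right hqub hδ.le
    have h9 : ((D+3) * (w.length:ℝ)) * δ = (δ * (8*(D+3))) * w.length / 8 := by ring
    rw [hδε] at h9
    linarith
  have h2K : 2*K ≤ ε * w.length / 8 := by
    nlinarith [hKw, mul_nonneg hK hD.le]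
  have key : (N:ℝ) * ((3/4) * (ε * w.length)) < Cq := by
    have hPbb : ((q:ℝ) - w.length) * (ΛR + δ) + 2*K + F w
        < ((q:ℝ) - w.length) * (ΛR + δ) + 2*K + (w.length:ℝ)*(ΛR - ε) := by linarith
    have e2 : (N:ℝ) * (((q:ℝ) - w.length) * (ΛR + δ) + 2*K + F w)
        < (N:ℝ) * (((q:ℝ) - w.length) * (ΛR + δ) + 2*K + (w.length:ℝ)*(ΛR - ε)) :=
      mul_lt_mul_of_pos_left hPbb hNR
    have e3 : ((q:ℝ) - w.length) * (ΛR + δ) + 2*K + (w.length:ℝ)*(ΛR - ε)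
        = (q:ℝ)*ΛR + ((q:ℝ) - w.length)*δ + 2*K - (w.length:ℝ)*ε := by ring
    have e4 : ((q:ℝ) - w.length)*δ ≤ (q:ℝ)*δ := by nlinarith [hδ.le, hw0R]
    have e5 : ((q:ℝ) - w.length) * (ΛR + δ) + 2*K + (w.length:ℝ)*(ΛR - ε)
        ≤ (q:ℝ)*ΛR - (3/4)*(ε*w.length) := by rw [e3]; linarith
    have e6 : (N:ℝ) * (((q:ℝ) - w.length) * (ΛR + δ) + 2*K + F w)
        < (N:ℝ)*((q:ℝ)*ΛR) - (N:ℝ)*((3/4)*(ε*w.length)) := by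
      calc (N:ℝ) * (((q:ℝ) - w.length) * (ΛR + δ) + 2*K + F w) < _ := e2
      _ ≤ (N:ℝ) * ((q:ℝ)*ΛR - (3/4)*(ε*w.length)) := mul_le_mul_of_nonneg_left e5 hNR.le
      _ = _ := by ring
    have e7 : ΛR * ((N:ℝ)*q) = (N:ℝ)*((q:ℝ)*ΛR) := by ring
    linarith
  have hfin : 4 * Cq ≤ (N:ℝ) * (ε * w.length) := by
    have hc1 : (N:ℝ) * (ε*q) ≤ (N:ℝ) * (ε * ((D+3)*w.length)) := by
      apply mul_le_mul_of_nonneg_left _ hNR.le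
      exact mul_le_mul_of_nonneg_left hqub hε.le
    have hc2 : (N:ℝ) * (ε * ((D+3)*w.length)) = ((N:ℝ) * (ε * w.length)) * (D+3) := by ring
    have h8 : 4 * Cq * (D+3) ≤ ((N:ℝ) * (ε * w.length)) * (D+3) := by
      rw [← hc2]; linarith
    exact le_of_mul_le_mul_right h8 hD3
  nlinarith [key, hfin, mul_pos hNR (mul_pos hε hw0R)]
end AuxLemmas

/-- a linearly repetitive subshift satisfies the uniform subadditive
ergodic theorem (SET). -/
theorem linearlyRepetitive_implies_SET
    {A : Type*} [Fintype A] [Nonempty A] [TopologicalSpace A] [DiscreteTopology A]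
    (Ω : Set (ℤ → A)) (hΩ : IsSubshift Ω) (hLR : LinearlyRepetitive (words Ω)) :
    SET (words Ω) := by
  intro F hF
  rcases Set.eq_empty_or_nonempty Ω with hΩe | hΩne
  · have hbot : wordsFilter (words Ω) = ⊥ := by
      apply le_bot_iff.mp
      refine le_trans (iInf_le _ 0) ?_
      have hempty : {w : List A | w ∈ words Ω ∧ 0 ≤ w.length} = ∅ := by
        ext w
        simp only [Set.mem_setOf_eq, Set.mem_empty_iff_false, iff_false, not_and]
        rintro ⟨ω, hω, -⟩
        rw [hΩe] at hω
        exact absurd hω (Set.notMem_empty ω)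
      rw [hempty, Filter.principal_empty]
    rw [hbot]
    exact tendsto_bot
  · have hcl : ∀ v w : List A, v <:+: w → w ∈ words Ω → v ∈ words Ω :=
      fun v w h hw => infix_mem_words h hw
    have hlen : ∀ n : ℕ, ∃ v ∈ words Ω, v.length = n := exists_word_len hΩne
    obtain ⟨D, hD, hLRb⟩ := hLR
    set Λ : EReal := ⨅ n : {n : ℕ // 1 ≤ n}, ((wordSup (words Ω) F n.1 : ℝ) : EReal)
      with hΛ
    have upper : ∀ n : ℕ, 1 ≤ n → ∀ ε : ℝ, 0 < ε → ∃ L : ℕ, 1 ≤ L ∧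
        ∀ w ∈ words Ω, L ≤ w.length →
          F w / (w.length:ℝ) ≤ wordSup (words Ω) F n + ε := by
      intro n hn ε hε
      obtain ⟨C, hC, hCb⟩ := existsC (W := words Ω) F n
      have hSn : ∀ u ∈ words Ω, u.length = n →
          F u ≤ (n:ℝ) * wordSup (words Ω) F n := by
        intro u hu hul
        have h1 := le_wordSup (F := F) hu hul
        have h2 : (0:ℝ) < (n:ℝ) := by exact_mod_cast hn
        rw [hul, div_le_iff₀ h2] at h1
        linarith
      have hchop := chop hcl hF n hn _ C hC hSn hCb
      obtain ⟨L0, hL0⟩ := exists_nat_gt (((n:ℝ) * |wordSup (words Ω) F n| + C) / ε)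
      refine ⟨max 1 L0, le_max_left _ _, fun w hw hwL => ?_⟩
      have hw1 : 1 ≤ w.length := le_trans (le_max_left _ _) hwL
      have hwne : w ≠ [] := by intro h; rw [h] at hw1; simp at hw1
      have hw0R : (0:ℝ) < (w.length:ℝ) := by exact_mod_cast hw1
      have h := hchop w hw hwne
      have hwL0 : (L0:ℝ) ≤ (w.length:ℝ) := by
        exact_mod_cast le_trans (le_max_right 1 L0) hwL
      rw [div_lt_iff₀ hε] at hL0
      have hKe : (n:ℝ) * |wordSup (words Ω) F n| + C ≤ ε * w.length := by nlinarith
      rw [div_le_iff₀ hw0R]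
      have hexp : (wordSup (words Ω) F n + ε) * (w.length:ℝ)
          = (w.length:ℝ) * wordSup (words Ω) F n + ε * w.length := by ring
      rw [hexp]
      linarith
    have hΛtop : Λ ≠ ⊤ := by
      have h1 : Λ ≤ ((wordSup (words Ω) F 1 : ℝ) : EReal) := iInf_le _ (⟨1, le_refl 1⟩ : {n : ℕ // 1 ≤ n})
      exact ne_top_of_le_ne_top (EReal.coe_ne_top _) h1
    by_cases hbot : Λ = ⊥
    · rw [hbot]
      rw [EReal.tendsto_nhds_bot_iff_real]
      intro M
      have hlt : Λ < ((M - 1 : ℝ) : EReal) := by rw [hbot]; exact EReal.bot_lt_coe _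
      rw [hΛ] at hlt
      obtain ⟨n, hn⟩ := iInf_lt_iff.mp hlt
      have hnlt : wordSup (words Ω) F n.1 < M - 1 := by exact_mod_cast hn
      obtain ⟨L, hL1, hL⟩ := upper n.1 n.2 1 one_pos
      apply eventually_wordsFilter ⟨L, fun w hw hwL => ?_⟩
      have h2 := hL w hw hwL
      have h3 : F w / (w.length:ℝ) < M := by linarith
      exact_mod_cast h3
    · obtain ⟨ΛR, hΛR⟩ : ∃ x : ℝ, Λ = (x : EReal) :=
        ⟨Λ.toReal, (EReal.coe_toReal hΛtop hbot).symm⟩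
      rw [hΛR, EReal.tendsto_coe, Metric.tendsto_nhds]
      have hΛle : ∀ n : ℕ, 1 ≤ n → ΛR ≤ wordSup (words Ω) F n := by
        intro n hn
        have h1 : Λ ≤ ((wordSup (words Ω) F n : ℝ) : EReal) := iInf_le _ (⟨n, hn⟩ : {n : ℕ // 1 ≤ n})
        rw [hΛR] at h1
        exact_mod_cast h1
      have hex : ∀ δ : ℝ, 0 < δ → ∃ n, 1 ≤ n ∧ wordSup (words Ω) F n ≤ ΛR + δ := by
        intro δ hδ
        have hlt : Λ < ((ΛR + δ : ℝ) : EReal) := by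
          rw [hΛR]
          exact_mod_cast lt_add_of_pos_right ΛR hδ
        rw [hΛ] at hlt
        obtain ⟨n, hn⟩ := iInf_lt_iff.mp hlt
        exact ⟨n.1, n.2, le_of_lt (by exact_mod_cast hn)⟩
      intro ε hε
      obtain ⟨n1, hn1, hn1b⟩ := hex (ε/4) (by positivity)
      obtain ⟨Lu, hLu1, hLu⟩ := upper n1 hn1 (ε/4) (by positivity)
      have hlow : ∃ Ll : ℕ, ∀ w ∈ words Ω, Ll ≤ w.length →
          ΛR - ε/2 ≤ F w / (w.length:ℝ) := by
        by_contra hcon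
        push_neg at hcon
        exact lower_contradiction hcl hF hlen D hD hLRb ΛR hΛle hex (ε/2)
          (by positivity) (fun L => hcon L)
      obtain ⟨Ll, hLl⟩ := hlow
      apply eventually_wordsFilter ⟨max Lu Ll, fun w hw hwL => ?_⟩
      have h1 := hLu w hw (le_trans (le_max_left _ _) hwL)
      have h2 := hLl w hw (le_trans (le_max_right _ _) hwL)
      rw [Real.dist_eq, abs_lt]
      constructor <;> linarith

end SubshiftErgodic
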